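/- Let g1 and g2 be temporal graph patterns. Then g1 ⊆_t g2 if and only if there exists an occurrence of nodeseq(g1) as a subsequence of enhseq(g2) whose induced mapping f_s from the nodes of g1 to the nodes of g2 is injective and label-preserving, and f_s(edgeseq(g1)) is a subsequence of edgeseq(g2), where f_s(edgeseq(g1)) denotes edgeseq(g1) with each edge endpoint u replaced by f_s(u). -/

import Mathlib

/-- A temporal graph: a finite set of nodes (natural numbers), a finite set of
directed timestamped edges `(u, v, t)` with pairwise distinct timestamps, and a
node-labeling function into a label type `σ`. -/
structure TemporalGraph (σ : Type) where
  V : Finset ℕ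
  E : Finset (ℕ × ℕ × ℕ)
  A : ℕ → σ
  mem_src : ∀ e ∈ E, e.1 ∈ V
  mem_dst : ∀ e ∈ E, e.2.1 ∈ V
  time_inj : ∀ e ∈ E, ∀ e' ∈ E, e.2.2 = e'.2.2 → e = e'

namespace TGaux

/-- one step of the nodeseq fold, on edge pairs -/
def nstep (acc : List ℕ) (p : ℕ × ℕ) : List ℕ :=
  let acc1 := if p.1 ∈ acc then acc else acc ++ [p.1]
  if p.2 ∈ acc1 then acc1 else acc1 ++ [p.2]

/-- nodes newly appended when processing edge (u,v) with seen-list S -/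
def nodeNew (S : List ℕ) (u v : ℕ) : List ℕ :=
  (if u ∈ S then [] else [u]) ++ (if v ∈ S ∨ v = u then [] else [v])

lemma nstep_eq (S : List ℕ) (u v : ℕ) : nstep S (u, v) = S ++ nodeNew S u v := by
  simp only [nstep, nodeNew]
  by_cases hu : u ∈ S <;> by_cases hv : v ∈ S <;> by_cases hvu : v = u <;>
    simp_all [List.append_assoc]

/-- appended part of the nodeseq fold -/
def ntail : List ℕ → List (ℕ × ℕ) → List ℕ
  | _, [] => []
  | S, (u, v) :: M => nodeNew S u v ++ ntail (S ++ nodeNew S u v) M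

lemma foldl_nstep (M : List (ℕ × ℕ)) : ∀ S, M.foldl nstep S = S ++ ntail S M := by
  induction M with
  | nil => intro S; simp [ntail]
  | cons p M ih =>
    intro S
    obtain ⟨u, v⟩ := p
    simp only [List.foldl_cons, nstep_eq, ntail, ih, List.append_assoc]

lemma not_mem_of_mem_ntail : ∀ (M : List (ℕ × ℕ)) (S : List ℕ) (x : ℕ),
    x ∈ ntail S M → x ∉ S := by
  intro M
  induction M with
  | nil => intro S x hx; simp [ntail] at hx
  | cons p M ih =>
    intro S x hx
    obtain ⟨u, v⟩ := p
    simp only [ntail, List.mem_append] at hx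
    rcases hx with hx | hx
    · simp only [nodeNew, List.mem_append] at hx
      rcases hx with hx | hx
      · by_cases hu : u ∈ S <;> simp_all
      · by_cases hv : v ∈ S ∨ v = u <;> simp_all
    · have := ih _ _ hx
      simp only [List.mem_append] at this
      exact fun h => this (Or.inl h)

/-- one step of the enhseq fold, on edge pairs -/
def estep (p : List ℕ × Option ℕ) (q : ℕ × ℕ) : List ℕ × Option ℕ :=
  let s1 := if p.1.getLast? = some q.1 ∨ p.2 = some q.1 then p.1 else p.1 ++ [q.1]
  (s1 ++ [q.2], some q.1)

/-- appended part of the enhseq fold -/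
def etail : Option ℕ → Option ℕ → List (ℕ × ℕ) → List ℕ
  | _, _, [] => []
  | lst, prev, (u, v) :: P =>
      (if lst = some u ∨ prev = some u then [] else [u]) ++ v :: etail (some v) (some u) P

lemma foldl_estep (P : List (ℕ × ℕ)) : ∀ (acc : List ℕ) (prev : Option ℕ),
    (P.foldl estep (acc, prev)).1 = acc ++ etail acc.getLast? prev P := by
  induction P with
  | nil => intro acc prev; simp [etail]
  | cons q P ih =>
    intro acc prev
    obtain ⟨u, v⟩ := q
    simp only [List.foldl_cons, estep, etail]
    by_cases h : acc.getLast? = some u ∨ prev = some u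
    · rw [if_pos h, if_pos h]
      rw [ih (acc ++ [v]) (some u), List.getLast?_concat]
      simp [List.append_assoc]
    · rw [if_neg h, if_neg h]
      rw [ih (acc ++ [u] ++ [v]) (some u)]
      rw [show acc ++ [u] ++ [v] = (acc ++ [u]) ++ [v] by simp [List.append_assoc],
        List.getLast?_concat]
      simp [List.append_assoc]

/-- KEY: a sublist of the edge list gives nodeseq-tail a sublist of enhseq-tail,
up to one "credit" match at the last/previous source. -/
lemma key {M P : List (ℕ × ℕ)} (h : M.Sublist P) : ∀ (S : List ℕ) (lst prev : Option ℕ),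
    (ntail S M).Sublist (etail lst prev P) ∨
    ∃ w rest, ntail S M = w :: rest ∧ (lst = some w ∨ prev = some w) ∧
      rest.Sublist (etail lst prev P) := by
  induction h with
  | slnil => intro S lst prev; left; simp [ntail]
  | @cons M P a _h ih =>
    intro S lst prev
    obtain ⟨u, v⟩ := a
    have hsuf : (etail (some v) (some u) P).Sublist (etail lst prev ((u, v) :: P)) := by
      simp only [etail]
      exact ((List.sublist_cons_self v _).trans (List.sublist_append_right _ _))
    rcases ih S (some v) (some u) with h1 | ⟨w, rest, he, hw, hrest⟩
    · left; exact h1.trans hsuf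
    · rcases hw with hw | hw
      · -- w = v
        have hwv : w = v := by injection hw.symm
        subst hwv
        left
        rw [he]
        simp only [etail]
        exact ((hrest.cons₂ w).trans (List.sublist_append_right _ _))
      · -- w = u
        have hwu : u = w := by injection hw
        subst hwu
        by_cases hc : lst = some u ∨ prev = some u
        · right
          refine ⟨u, rest, he, hc, ?_⟩
          exact hrest.trans hsuf
        · left
          rw [he]
          simp only [etail, if_neg hc]
          exact (hrest.trans ((List.sublist_cons_self v _))).cons₂ u
  | @cons_cons M P a _h ih =>
    intro S lst prev
    obtain ⟨u, v⟩ := a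
    set S' := S ++ nodeNew S u v with hS'
    have huS' : u ∈ S' := by
      simp only [hS', nodeNew, List.mem_append]
      by_cases hu : u ∈ S <;> simp [hu]
    have hvS' : v ∈ S' := by
      by_cases hv : v ∈ S
      · simp [hS', hv]
      · by_cases hvu : v = u
        · exact hvu ▸ huS'
        · simp [hS', nodeNew, hv, hvu]
    have hT' : (ntail S' M).Sublist (etail (some v) (some u) P) := by
      rcases ih S' (some v) (some u) with h1 | ⟨w, rest, he, hw, hrest⟩
      · exact h1
      · exfalso
        have hwmem : w ∈ ntail S' M := by rw [he]; exact List.mem_cons_self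
        have := not_mem_of_mem_ntail M S' w hwmem
        rcases hw with hw | hw
        · have : w = v := by injection hw.symm
          subst this; exact (not_mem_of_mem_ntail M S' w hwmem) hvS'
        · have : w = u := by injection hw.symm
          subst this; exact (not_mem_of_mem_ntail M S' w hwmem) huS'
    have hgoal : ntail S ((u, v) :: M) = nodeNew S u v ++ ntail S' M := rfl
    by_cases hu : u ∈ S
    · -- nodeNew = [] or [v]
      left
      rw [hgoal]
      by_cases hv : v ∈ S ∨ v = u
      · simp only [nodeNew, if_pos hu, if_pos hv, List.nil_append]
        refine hT'.trans ?_
        simp only [etail]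
        exact ((List.sublist_cons_self v _).trans (List.sublist_append_right _ _))
      · simp only [nodeNew, if_pos hu, if_neg hv, List.nil_append]
        simp only [etail]
        exact (hT'.cons₂ v).trans (List.sublist_append_right _ _)
    · by_cases hc : lst = some u ∨ prev = some u
      · right
        by_cases hv : v ∈ S ∨ v = u
        · refine ⟨u, ntail S' M, ?_, hc, ?_⟩
          · rw [hgoal]; simp [nodeNew, hu, hv]
          · simp only [etail, if_pos hc, List.nil_append]
            exact hT'.trans (List.sublist_cons_self v _)
        · refine ⟨u, v :: ntail S' M, ?_, hc, ?_⟩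
          · rw [hgoal]; simp [nodeNew, hu, hv]
          · simp only [etail, if_pos hc, List.nil_append]
            exact hT'.cons₂ v
      · left
        rw [hgoal]
        simp only [etail, if_neg hc]
        by_cases hv : v ∈ S ∨ v = u
        · simp only [nodeNew, if_neg hu, if_pos hv, List.append_nil]
          exact ((hT'.trans (List.sublist_cons_self v _)).cons₂ u).trans
            (by simp)
        · simp only [nodeNew, if_neg hu, if_neg hv]
          exact ((hT'.cons₂ v).cons₂ u).trans (by simp)

lemma key' {M P : List (ℕ × ℕ)} (h : M.Sublist P) :
    (ntail [] M).Sublist (etail none none P) := by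
  rcases key h [] none none with h1 | ⟨w, rest, _, hw, _⟩
  · exact h1
  · rcases hw with hw | hw <;> exact absurd hw (by simp)

/-- mapping nodeseq-tail under a function injective on the relevant nodes -/
lemma map_ntail (f : ℕ → ℕ) : ∀ (M : List (ℕ × ℕ)) (S : List ℕ),
    (∀ x y, (x ∈ S ∨ ∃ p ∈ M, x = p.1 ∨ x = p.2) →
      (y ∈ S ∨ ∃ p ∈ M, y = p.1 ∨ y = p.2) → f x = f y → x = y) →
    (ntail S M).map f = ntail (S.map f) (M.map fun p => (f p.1, f p.2)) := by
  intro M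
  induction M with
  | nil => intro S _; simp [ntail]
  | cons p M ih =>
    intro S hinj
    obtain ⟨u, v⟩ := p
    have humem : (u ∈ S ∨ ∃ p ∈ (u, v) :: M, u = p.1 ∨ u = p.2) :=
      Or.inr ⟨(u, v), List.mem_cons_self, Or.inl rfl⟩
    have hvmem : (v ∈ S ∨ ∃ p ∈ (u, v) :: M, v = p.1 ∨ v = p.2) :=
      Or.inr ⟨(u, v), List.mem_cons_self, Or.inr rfl⟩
    have hu : u ∈ S ↔ f u ∈ S.map f := by
      constructor
      · exact fun h => List.mem_map_of_mem (f := f) h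
      · intro h
        obtain ⟨x, hx, hfx⟩ := List.mem_map.mp h
        exact (hinj x u (Or.inl hx) humem hfx) ▸ hx
    have hv : v ∈ S ↔ f v ∈ S.map f := by
      constructor
      · exact fun h => List.mem_map_of_mem (f := f) h
      · intro h
        obtain ⟨x, hx, hfx⟩ := List.mem_map.mp h
        exact (hinj x v (Or.inl hx) hvmem hfx) ▸ hx
    have hvu : v = u ↔ f v = f u := by
      constructor
      · exact fun h => h ▸ rfl
      · exact fun h => hinj v u hvmem humem h
    have hnn : (nodeNew S u v).map f = nodeNew (S.map f) (f u) (f v) := by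
      simp only [nodeNew, List.map_append]
      congr 1
      · by_cases h1 : u ∈ S
        · rw [if_pos h1, if_pos (hu.mp h1)]; rfl
        · rw [if_neg h1, if_neg (fun h => h1 (hu.mpr h))]; rfl
      · by_cases h2 : v ∈ S ∨ v = u
        · rw [if_pos h2, if_pos]
          · rfl
          · rcases h2 with h | h
            · exact Or.inl (hv.mp h)
            · exact Or.inr (hvu.mp h)
        · rw [if_neg h2, if_neg]
          · rfl
          · intro h
            rcases h with h | h
            · exact h2 (Or.inl (hv.mpr h))
            · exact h2 (Or.inr (hvu.mpr h))
    show ((nodeNew S u v) ++ ntail (S ++ nodeNew S u v) M).map f = _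
    rw [List.map_append, hnn]
    have := ih (S ++ nodeNew S u v) ?_
    · rw [this, List.map_append, hnn]
      rfl
    · intro x y hx hy hfxy
      refine hinj x y ?_ ?_ hfxy
      · rcases hx with hx | ⟨p, hp, hxp⟩
        · rcases List.mem_append.mp hx with h | h
          · exact Or.inl h
          · simp only [nodeNew, List.mem_append] at h
            rcases h with h | h
            · by_cases h1 : u ∈ S
              · simp [h1] at h
              · simp only [if_neg h1, List.mem_singleton] at h
                exact h ▸ humem
            · by_cases h2 : v ∈ S ∨ v = u
              · simp [h2] at h
              · simp only [if_neg h2, List.mem_singleton] at h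
                exact h ▸ hvmem
        · exact Or.inr ⟨p, List.mem_cons_of_mem _ hp, hxp⟩
      · rcases hy with hy | ⟨p, hp, hyp⟩
        · rcases List.mem_append.mp hy with h | h
          · exact Or.inl h
          · simp only [nodeNew, List.mem_append] at h
            rcases h with h | h
            · by_cases h1 : u ∈ S
              · simp [h1] at h
              · simp only [if_neg h1, List.mem_singleton] at h
                exact h ▸ humem
            · by_cases h2 : v ∈ S ∨ v = u
              · simp [h2] at h
              · simp only [if_neg h2, List.mem_singleton] at h
                exact h ▸ hvmem
        · exact Or.inr ⟨p, List.mem_cons_of_mem _ hp, hyp⟩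

/-- a sorted list whose elements all lie in another sorted list is a sublist of it -/
lemma sorted_sublist {α : Type*} {r : α → α → Prop} (hasym : ∀ a b, r a b → ¬ r b a) :
    ∀ (B A : List α), A.Pairwise r → B.Pairwise r → (∀ a ∈ A, a ∈ B) → A.Sublist B := by
  intro B
  induction B with
  | nil =>
    intro A _ _ hmem
    cases A with
    | nil => exact List.Sublist.refl _
    | cons a A' => exact absurd (hmem a (List.mem_cons_self)) List.not_mem_nil
  | cons b B ih =>
    intro A hA hB hmem
    cases A with
    | nil => exact List.nil_sublist _
    | cons a A' =>
      rcases List.pairwise_cons.mp hA with ⟨hra, hA'⟩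
      rcases List.pairwise_cons.mp hB with ⟨hrb, hB'⟩
      by_cases hab : a = b
      · subst hab
        refine (ih A' hA' hB' ?_).cons₂ a
        intro x hx
        have hxB := hmem x (List.mem_cons_of_mem _ hx)
        rcases List.mem_cons.mp hxB with h | h
        · exact absurd (h ▸ hra x hx) (hasym _ _ (h ▸ hra x hx))
        · exact h
      · refine (ih (a :: A') hA hB' ?_).cons b
        intro x hx
        have hxB := hmem x hx
        rcases List.mem_cons.mp hxB with h | h
        · exfalso
          rcases List.mem_cons.mp hx with h2 | h2
          · exact hab (h2 ▸ h)
          · -- x ∈ A', x = b; a ∈ b :: B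
            have haB : a ∈ B := by
              rcases List.mem_cons.mp (hmem a (List.mem_cons_self)) with h3 | h3
              · exact absurd h3 hab
              · exact h3
            exact hasym b a (hrb a haB) (h ▸ hra x h2)
        · exact h

end TGaux

namespace TemporalGraph

variable {σ : Type}

/-- The set of edge timestamps of a temporal graph. -/
def times (G : TemporalGraph σ) : Finset ℕ := G.E.image fun e => e.2.2

/-- A temporal graph pattern: the edge timestamps are exactly `{1, …, |E|}`. -/
def IsPattern (g : TemporalGraph σ) : Prop := g.times = Finset.Icc 1 g.E.card

/-- `f, τ` witness that `g` is a temporal subgraph of `G`: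
`f` maps nodes injectively preserving labels, `τ` maps timestamps injectively,
edges are mapped to edges, and the temporal (total) edge order is preserved. -/
def IsTSubWith (g G : TemporalGraph σ) (f τ : ℕ → ℕ) : Prop :=
  Set.MapsTo f ↑g.V ↑G.V ∧ Set.InjOn f ↑g.V ∧
  Set.MapsTo τ ↑g.times ↑G.times ∧ Set.InjOn τ ↑g.times ∧
  (∀ u ∈ g.V, g.A u = G.A (f u)) ∧
  (∀ e ∈ g.E, (f e.1, f e.2.1, τ e.2.2) ∈ G.E) ∧
  (∀ e ∈ g.E, ∀ e' ∈ g.E, (e.2.2 < e'.2.2 ↔ τ e.2.2 < τ e'.2.2))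

/-- `g ⊆_t G` : `g` is a temporal subgraph of `G`. -/
def IsTSub (g G : TemporalGraph σ) : Prop := ∃ f τ, IsTSubWith g G f τ

/-- `f, τ` witness that `G` is a match of `g` (`G =_t g`): the witnessing
functions are bijective between the node sets and between the timestamp sets. -/
def IsMatchWith (g G : TemporalGraph σ) (f τ : ℕ → ℕ) : Prop :=
  IsTSubWith g G f τ ∧ Set.BijOn f ↑g.V ↑G.V ∧ Set.BijOn τ ↑g.times ↑G.times

/-- `G` is a match of `g`, i.e. `G =_t g`. -/
def IsMatchOf (G g : TemporalGraph σ) : Prop := ∃ f τ, IsMatchWith g G f τ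

/-- `v` is incident to some edge in the edge set `E`. -/
def Incident (E : Finset (ℕ × ℕ × ℕ)) (v : ℕ) : Prop := ∃ e ∈ E, v = e.1 ∨ v = e.2.1

/-- Undirected adjacency induced by an edge set (edge directions ignored). -/
def AdjIn (E : Finset (ℕ × ℕ × ℕ)) (u v : ℕ) : Prop := ∃ t, (u, v, t) ∈ E ∨ (v, u, t) ∈ E

/-- The edge set `E` forms a connected (undirected) graph on the nodes incident to it. -/
def ConnectedOn (E : Finset (ℕ × ℕ × ℕ)) : Prop :=
  ∀ u v, Incident E u → Incident E v → Relation.ReflTransGen (AdjIn E) u v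

/-- The edges of `G` with timestamp at most `t`. -/
def edgesUpTo (G : TemporalGraph σ) (t : ℕ) : Finset (ℕ × ℕ × ℕ) :=
  G.E.filter fun e => e.2.2 ≤ t

/-- T-connectivity: every node is incident to an edge, and for every edge
timestamp `t` the edges with timestamps at most `t` form a connected
(undirected) graph on the nodes incident to those edges. -/
def TConnected (G : TemporalGraph σ) : Prop :=
  (∀ v ∈ G.V, Incident G.E v) ∧ ∀ t ∈ G.times, ConnectedOn (G.edgesUpTo t)

/-- A single consecutive growth step: `g'` is obtained from the T-connected
pattern `g` by adding the new edge `(u, v, |E|+1)`, and `g'` is again a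
T-connected temporal graph pattern. -/
def GrowStep (g g' : TemporalGraph σ) (u v : ℕ) : Prop :=
  g.IsPattern ∧ g.TConnected ∧ g'.IsPattern ∧ g'.TConnected ∧
  g'.E = insert (u, v, g.E.card + 1) g.E ∧
  g'.V = insert u (insert v g.V) ∧
  (∀ w ∈ g.V, g'.A w = g.A w)

/-- `GrowSeq g s g'` : `g'` is obtained from `g` by the sequence of consecutive
growth steps adding the edges (endpoint pairs) listed in `s`, in order. -/
inductive GrowSeq : TemporalGraph σ → List (ℕ × ℕ) → TemporalGraph σ → Prop
  | nil (g : TemporalGraph σ) : GrowSeq g [] g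
  | cons {g h g' : TemporalGraph σ} {u v : ℕ} {s : List (ℕ × ℕ)} :
      GrowStep g h u v → GrowSeq h s g' → GrowSeq g ((u, v) :: s) g'

/-- `H` is a subgraph of `G`. -/
def IsSubgraphOf (H G : TemporalGraph σ) : Prop :=
  H.V ⊆ G.V ∧ H.E ⊆ G.E ∧ H.A = G.A

/-- `H` is a subgraph of `G` that is a match of the pattern `g`,
i.e. `H ∈ 𝕄(G, g)`. -/
def MatchIn (H G g : TemporalGraph σ) : Prop := IsSubgraphOf H G ∧ IsMatchOf H g

/-- The largest edge timestamp of a temporal graph (`0` if there are no edges). -/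
def maxTime (H : TemporalGraph σ) : ℕ := H.E.sup fun e => e.2.2

/-- The edge set of the residual graph `R(G, H)`: all edges of `G` whose
timestamp is strictly larger than the largest edge timestamp of `H`.
(The residual graph is determined by this edge set: its nodes are the nodes
incident to these edges and its labels are those of `G`.) -/
def resEdges (G H : TemporalGraph σ) : Finset (ℕ × ℕ × ℕ) :=
  G.E.filter fun e => maxTime H < e.2.2

/-- Multiplicity of the residual graph (with edge set) `R` in the multiset
`{R(G, G') : G' ∈ 𝕄(G, g)}`. -/
noncomputable def resCount (G g : TemporalGraph σ) (R : Finset (ℕ × ℕ × ℕ)) : ℕ :=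
  Set.ncard {H : TemporalGraph σ | MatchIn H G g ∧ resEdges G H = R}

/-- `ℝ(𝔾, g₁) = ℝ(𝔾, g₂)` as multisets of pairs `(G, R(G, G'))`. -/
def ResEq (𝔾 : Set (TemporalGraph σ)) (g₁ g₂ : TemporalGraph σ) : Prop :=
  ∀ G ∈ 𝔾, ∀ R : Finset (ℕ × ℕ × ℕ), resCount G g₁ R = resCount G g₂ R

/-- The frequency of a pattern `g` with respect to a finite set `𝔾` of
temporal graphs. -/
noncomputable def freq (𝔾 : Set (TemporalGraph σ)) (g : TemporalGraph σ) : ℝ :=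
  (Set.ncard {G ∈ 𝔾 | IsTSub g G} : ℝ) / (Set.ncard 𝔾 : ℝ)

/-- The residual node label set `𝕃(𝔾, g)`: all labels of nodes of residual
graphs occurring in `ℝ(𝔾, g)`. -/
def resLabels (𝔾 : Set (TemporalGraph σ)) (g : TemporalGraph σ) : Set σ :=
  {ℓ | ∃ G ∈ 𝔾, ∃ H, MatchIn H G g ∧ ∃ e ∈ resEdges G H, G.A e.1 = ℓ ∨ G.A e.2.1 = ℓ}

/-- `I(𝔾, g)`: the sum of `|R(G, G')|` over all elements of `ℝ(𝔾, g)`. -/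
noncomputable def resSum (𝔾 : Set (TemporalGraph σ)) (g : TemporalGraph σ) : ℕ :=
  ∑ᶠ G ∈ 𝔾, ∑ᶠ K ∈ {K : TemporalGraph σ | MatchIn K G g}, (resEdges G K).card


/-- `L` is the list of the edges of `g` in increasing timestamp order. -/
def IsEdgeList (g : TemporalGraph σ) (L : List (ℕ × ℕ × ℕ)) : Prop :=
  (∀ e, e ∈ L ↔ e ∈ g.E) ∧ L.Pairwise fun e e' => e.2.2 < e'.2.2

/-- `nodeseq`: traversing the edges in increasing timestamp order (within an
edge, the source node before the destination node), list the nodes in order of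
their first visit, each node appearing exactly once. -/
def nodeseqL (L : List (ℕ × ℕ × ℕ)) : List ℕ :=
  L.foldl (fun acc e =>
    let acc1 := if e.1 ∈ acc then acc else acc ++ [e.1]
    if e.2.1 ∈ acc1 then acc1 else acc1 ++ [e.2.1]) []

/-- `edgeseq`: the edges, in increasing timestamp order, as (source, destination)
pairs. -/
def edgeseqL (L : List (ℕ × ℕ × ℕ)) : List (ℕ × ℕ) := L.map fun e => (e.1, e.2.1)

/-- `enhseq`: process the edges `(u, v, t)` in increasing timestamp order and,
for each edge, append `u` unless `u` is the last node currently in the sequence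
or `u` is the source node of the previously processed edge, and then always
append `v`. -/
def enhseqL (L : List (ℕ × ℕ × ℕ)) : List ℕ :=
  (L.foldl (fun (p : List ℕ × Option ℕ) e =>
    let s1 := if p.1.getLast? = some e.1 ∨ p.2 = some e.1 then p.1 else p.1 ++ [e.1]
    (s1 ++ [e.2.1], some e.1)) (([] : List ℕ), (none : Option ℕ))).1


open TGaux in
lemma nodeseqL_eq_ntail (L : List (ℕ × ℕ × ℕ)) :
    nodeseqL L = TGaux.ntail [] (edgeseqL L) := by
  have h : nodeseqL L = (edgeseqL L).foldl TGaux.nstep [] := by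
    simp only [nodeseqL, edgeseqL, List.foldl_map]
    rfl
  rw [h, TGaux.foldl_nstep]
  rfl

open TGaux in
lemma enhseqL_eq_etail (L : List (ℕ × ℕ × ℕ)) :
    enhseqL L = TGaux.etail none none (edgeseqL L) := by
  have h : enhseqL L = ((edgeseqL L).foldl TGaux.estep ([], none)).1 := by
    simp only [enhseqL, edgeseqL, List.foldl_map]
    rfl
  rw [h, TGaux.foldl_estep]
  rfl

lemma pair_lt_iff {K : List (ℕ × ℕ × ℕ)}
    (h : K.Pairwise (fun a b => a.2.2 < b.2.2)) {i j : ℕ}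
    (hi : i < K.length) (hj : j < K.length) :
    K[i].2.2 < K[j].2.2 ↔ i < j := by
  rw [List.pairwise_iff_getElem] at h
  constructor
  · intro hlt
    by_contra hn
    push_neg at hn
    rcases Nat.lt_or_ge j i with hji | hij
    · exact Nat.lt_asymm hlt (h j i hj hi hji)
    · have : i = j := le_antisymm hij hn
      subst this
      exact Nat.lt_irrefl _ hlt
  · exact fun hij => h i j hi hj hij

/-- Let `g₁` and `g₂` be temporal graph patterns (with every node
of `g₁` incident to an edge, so that the traversal visits all of its nodes).
Then `g₁ ⊆_t g₂` iff there is an occurrence of `nodeseq(g₁)` as a subsequence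
of `enhseq(g₂)` whose induced node mapping `fs` is injective and
label-preserving and such that `fs(edgeseq(g₁))` is a subsequence of
`edgeseq(g₂)` (where `fs(edgeseq(g₁))` replaces each edge endpoint `u` by
`fs u`). -/
theorem tsub_iff_subsequences (g₁ g₂ : TemporalGraph σ)
    (hp₁ : g₁.IsPattern) (hp₂ : g₂.IsPattern)
    (hi₁ : ∀ v ∈ g₁.V, Incident g₁.E v)
    (L₁ L₂ : List (ℕ × ℕ × ℕ)) (hL₁ : IsEdgeList g₁ L₁) (hL₂ : IsEdgeList g₂ L₂) :
    IsTSub g₁ g₂ ↔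
      ∃ fs : ℕ → ℕ,
        Set.InjOn fs ↑g₁.V ∧
        (∀ u ∈ g₁.V, g₁.A u = g₂.A (fs u)) ∧
        ((nodeseqL L₁).map fs).Sublist (enhseqL L₂) ∧
        ((edgeseqL L₁).map fun p => (fs p.1, fs p.2)).Sublist (edgeseqL L₂) := by
  obtain ⟨hL₁mem, hL₁sorted⟩ := hL₁
  obtain ⟨hL₂mem, hL₂sorted⟩ := hL₂
  have hL₁sub : ∀ e ∈ L₁, e ∈ g₁.E := fun e he => (hL₁mem e).mp he
  have hL₂sub : ∀ e ∈ L₂, e ∈ g₂.E := fun e he => (hL₂mem e).mp he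
  constructor
  · rintro ⟨f, τ, hfV, hfinj, hτT, hτinj, hlab, hedge, hord⟩
    set F : ℕ × ℕ × ℕ → ℕ × ℕ × ℕ := fun e => (f e.1, f e.2.1, τ e.2.2) with hF
    have hApw : (L₁.map F).Pairwise (fun a b => a.2.2 < b.2.2) := by
      rw [List.pairwise_map]
      refine hL₁sorted.imp_of_mem ?_
      intro a b ha hb hab
      exact (hord a (hL₁sub a ha) b (hL₁sub b hb)).mp hab
    have hAsub : (L₁.map F).Sublist L₂ := by
      refine TGaux.sorted_sublist (fun a b => Nat.lt_asymm) L₂ (L₁.map F)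
        hApw hL₂sorted ?_
      intro x hx
      obtain ⟨e, he, rfl⟩ := List.mem_map.mp hx
      exact (hL₂mem _).mpr (hedge e (hL₁sub e he))
    have hpairs : ((edgeseqL L₁).map fun p => (f p.1, f p.2)).Sublist (edgeseqL L₂) := by
      have heq : ((edgeseqL L₁).map fun p => (f p.1, f p.2)) =
          (L₁.map F).map (fun e => (e.1, e.2.1)) := by
        simp only [edgeseqL, List.map_map]
        rfl
      rw [heq]
      exact hAsub.map _
    refine ⟨f, hfinj, hlab, ?_, hpairs⟩
    rw [nodeseqL_eq_ntail, enhseqL_eq_etail]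
    have hmap : (TGaux.ntail [] (edgeseqL L₁)).map f =
        TGaux.ntail [] ((edgeseqL L₁).map fun p => (f p.1, f p.2)) := by
      have := TGaux.map_ntail f (edgeseqL L₁) [] ?_
      · simpa using this
      · intro x y hx hy hfxy
        have hmem : ∀ z, (z ∈ ([] : List ℕ) ∨ ∃ p ∈ edgeseqL L₁, z = p.1 ∨ z = p.2) →
            z ∈ g₁.V := by
          rintro z (hz | ⟨p, hp, hzp⟩)
          · simp at hz
          · obtain ⟨e, he, rfl⟩ := List.mem_map.mp hp
            have heE := hL₁sub e he
            rcases hzp with rfl | rfl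
            · exact g₁.mem_src e heE
            · exact g₁.mem_dst e heE
        exact hfinj (hmem x hx) (hmem y hy) hfxy
    rw [hmap]
    exact TGaux.key' hpairs
  · rintro ⟨fs, hinj, hlab, _hnode, hedgesub⟩
    have hedgesub' : (L₁.map fun e => (fs e.1, fs e.2.1)).Sublist
        (L₂.map fun e => (e.1, e.2.1)) := by
      have heq : (L₁.map fun e => (fs e.1, fs e.2.1)) =
          (edgeseqL L₁).map fun p => (fs p.1, fs p.2) := by
        simp only [edgeseqL, List.map_map]
        rfl
      rw [heq]
      exact hedgesub
    obtain ⟨L₂', hL₂'sub, hmapeq⟩ := List.sublist_map_iff.mp hedgesub'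
    have hlen : L₁.length = L₂'.length := by
      have := congrArg List.length hmapeq
      simpa using this
    set Z := L₁.zip L₂' with hZ
    have hZlen : Z.length = L₁.length := by
      simp [hZ, List.length_zip, hlen]
    have hidx : ∀ {a b : ℕ × ℕ × ℕ}, (a, b) ∈ Z →
        ∃ i, ∃ h1 : i < L₁.length, ∃ h2 : i < L₂'.length, L₁[i] = a ∧ L₂'[i] = b := by
      intro a b hab
      obtain ⟨i, hi, hq⟩ := List.mem_iff_getElem.mp hab
      have h1 : i < L₁.length := by omega
      have h2 : i < L₂'.length := by omega
      refine ⟨i, h1, h2, ?_, ?_⟩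
      · have := List.getElem_zip (l := L₁) (l' := L₂') (i := i) (h := hi)
        rw [this] at hq
        exact (Prod.mk.injEq _ _ _ _ ▸ hq).1
      · have := List.getElem_zip (l := L₁) (l' := L₂') (i := i) (h := hi)
        rw [this] at hq
        exact (Prod.mk.injEq _ _ _ _ ▸ hq).2
    have hR : ∀ {a b : ℕ × ℕ × ℕ}, (a, b) ∈ Z →
        b.1 = fs a.1 ∧ b.2.1 = fs a.2.1 := by
      intro a b hab
      obtain ⟨i, h1, h2, ha, hb⟩ := hidx hab
      have := congrArg (fun l => l[i]?) hmapeq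
      simp only [List.getElem?_map] at this
      rw [List.getElem?_eq_getElem h1, List.getElem?_eq_getElem h2] at this
      simp only [Option.map_some] at this
      rw [ha, hb] at this
      have h3 := Option.some.inj this
      exact ⟨(congrArg Prod.fst h3).symm, (congrArg Prod.snd h3).symm⟩
    set τ : ℕ → ℕ := fun t => (Z.find? (fun q => q.1.2.2 == t)).elim 0 (fun q => q.2.2.2)
      with hτ
    have hF : ∀ e ∈ g₁.E, ∃ e₂, (e, e₂) ∈ Z ∧ τ e.2.2 = e₂.2.2 := by
      intro e he
      have heL : e ∈ L₁ := (hL₁mem e).mpr he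
      obtain ⟨i, hi, hei⟩ := List.mem_iff_getElem.mp heL
      have hi2 : i < L₂'.length := by omega
      have hiZ : i < Z.length := by omega
      have hmemZ : (e, L₂'[i]) ∈ Z := by
        have h := List.getElem_zip (l := L₁) (l' := L₂') (i := i) (h := hiZ)
        rw [hei] at h
        exact h ▸ List.getElem_mem hiZ
      have hsome : (Z.find? (fun q => q.1.2.2 == e.2.2)).isSome := by
        rw [List.find?_isSome]
        exact ⟨(e, L₂'[i]), hmemZ, by simp⟩
      obtain ⟨q, hqfind⟩ := Option.isSome_iff_exists.mp hsome
      have hq1 : q.1 ∈ L₁ := (List.of_mem_zip (by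
        rw [show ((q.1 : ℕ × ℕ × ℕ), (q.2 : ℕ × ℕ × ℕ)) = q from rfl]
        exact List.mem_of_find?_eq_some hqfind)).1
      have hqt : q.1.2.2 = e.2.2 := by
        have := List.find?_some hqfind
        simpa using this
      have hq1e : q.1 = e := g₁.time_inj q.1 (hL₁sub _ hq1) e he hqt
      refine ⟨q.2, ?_, ?_⟩
      · rw [← hq1e]
        rw [show ((q.1 : ℕ × ℕ × ℕ), (q.2 : ℕ × ℕ × ℕ)) = q from rfl]
        exact List.mem_of_find?_eq_some hqfind
      · rw [hτ]
        simp only [hqfind, Option.elim]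
    have hpw₂' : L₂'.Pairwise (fun a b => a.2.2 < b.2.2) :=
      List.Pairwise.sublist hL₂'sub hL₂sorted
    have hord : ∀ e ∈ g₁.E, ∀ e' ∈ g₁.E, (e.2.2 < e'.2.2 ↔ τ e.2.2 < τ e'.2.2) := by
      intro e he e' he'
      obtain ⟨e₂, hz, ht⟩ := hF e he
      obtain ⟨e₂', hz', ht'⟩ := hF e' he'
      obtain ⟨i, hi1, hi2, hia, hib⟩ := hidx hz
      obtain ⟨j, hj1, hj2, hja, hjb⟩ := hidx hz'
      rw [ht, ht']
      have h1 : e.2.2 < e'.2.2 ↔ i < j := by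
        rw [← hia, ← hja]
        exact pair_lt_iff hL₁sorted hi1 hj1
      have h2 : e₂.2.2 < e₂'.2.2 ↔ i < j := by
        rw [← hib, ← hjb]
        exact pair_lt_iff hpw₂' hi2 hj2
      rw [h1, h2]
    have hedges : ∀ e ∈ g₁.E, (fs e.1, fs e.2.1, τ e.2.2) ∈ g₂.E := by
      intro e he
      obtain ⟨e₂, hz, ht⟩ := hF e he
      obtain ⟨hR1, hR2⟩ := hR hz
      have he₂ : e₂ ∈ g₂.E := hL₂sub e₂ (hL₂'sub.subset (List.of_mem_zip hz).2)
      have : (fs e.1, fs e.2.1, τ e.2.2) = e₂ := by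
        rw [ht, ← hR1, ← hR2]
      rw [this]
      exact he₂
    refine ⟨fs, τ, ?_, hinj, ?_, ?_, hlab, hedges, hord⟩
    · intro v hv
      obtain ⟨e, he, hve⟩ := hi₁ v hv
      have := hedges e he
      rcases hve with rfl | rfl
      · exact g₂.mem_src _ this
      · exact g₂.mem_dst _ this
    · intro t ht
      obtain ⟨e, he, rfl⟩ := Finset.mem_image.mp ht
      obtain ⟨e₂, hz, hteq⟩ := hF e he
      have he₂ : e₂ ∈ g₂.E := hL₂sub e₂ (hL₂'sub.subset (List.of_mem_zip hz).2)
      rw [Finset.mem_coe, times, Finset.mem_image]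
      exact ⟨e₂, he₂, hteq.symm⟩
    · intro t ht t' ht' heq
      obtain ⟨e, he, rfl⟩ := Finset.mem_image.mp ht
      obtain ⟨e', he', rfl⟩ := Finset.mem_image.mp ht'
      by_contra hne
      rcases Nat.lt_or_ge e.2.2 e'.2.2 with h | h
      · have := (hord e he e' he').mp h
        omega
      · rcases Nat.lt_or_ge e'.2.2 e.2.2 with h2 | h2
        · have := (hord e' he' e he).mp h2
          omega
        · omega


end TemporalGraph
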